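/- Define on S_n: w ∈ D_{α_i, α_{i+1}} iff w⁻¹(i) < w⁻¹(i+1) and w⁻¹(i+1) > w⁻¹(i+2). For w ∈ D_{α_i,α_{i+1}}, define T(w) = s_i·w if α_{i+1} ∉ τ(s_i w), else T(w) = s_{i+1}·w, where τ(y) = {j : y⁻¹(j) > y⁻¹(j+1)}. Then T(w) ∈ D_{α_{i+1}, α_i} (i.e., T(w)⁻¹(i) > T(w)⁻¹(i+1) and T(w)⁻¹(i+1) < T(w)⁻¹(i+2)), and applying the analogous operator T' : D_{α_{i+1},α_i} → D_{α_i,α_{i+1}} gives T'(T(w)) = w. -/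
import Mathlib


/-- The simple transposition `s_α` swapping the values `i` and `i+1` (0-based). -/
def sA (n i : ℕ) (h : i + 2 < n) : Equiv.Perm (Fin n) :=
  Equiv.swap ⟨i, by omega⟩ ⟨i + 1, by omega⟩

/-- The simple transposition `s_β` swapping the values `i+1` and `i+2` (0-based). -/
def sB (n i : ℕ) (h : i + 2 < n) : Equiv.Perm (Fin n) :=
  Equiv.swap ⟨i + 1, by omega⟩ ⟨i + 2, h⟩

/-- `w ∈ D_{α,β}`: `α ∉ τ(w)` and `β ∈ τ(w)`, i.e.
`w⁻¹(i) < w⁻¹(i+1)` and `w⁻¹(i+1) > w⁻¹(i+2)` (0-based values). -/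
def inDAB (n i : ℕ) (h : i + 2 < n) (w : Equiv.Perm (Fin n)) : Prop :=
  w⁻¹ ⟨i, by omega⟩ < w⁻¹ ⟨i + 1, by omega⟩ ∧ w⁻¹ ⟨i + 2, h⟩ < w⁻¹ ⟨i + 1, by omega⟩

/-- `w ∈ D_{β,α}`: `w⁻¹(i) > w⁻¹(i+1)` and `w⁻¹(i+1) < w⁻¹(i+2)`. -/
def inDBA (n i : ℕ) (h : i + 2 < n) (w : Equiv.Perm (Fin n)) : Prop :=
  w⁻¹ ⟨i + 1, by omega⟩ < w⁻¹ ⟨i, by omega⟩ ∧ w⁻¹ ⟨i + 1, by omega⟩ < w⁻¹ ⟨i + 2, h⟩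

/-- Vogan's operator `T_{α,β}`: `T(w) = s_α·w` if `β ∉ τ(s_α·w)`, else `s_β·w`. -/
def vTAB (n i : ℕ) (h : i + 2 < n) (w : Equiv.Perm (Fin n)) : Equiv.Perm (Fin n) :=
  if (sA n i h * w)⁻¹ ⟨i + 2, h⟩ < (sA n i h * w)⁻¹ ⟨i + 1, by omega⟩ then
    sB n i h * w
  else sA n i h * w

/-- Vogan's operator `T_{β,α}`: `T'(y) = s_β·y` if `α ∉ τ(s_β·y)`, else `s_α·y`. -/
def vTBA (n i : ℕ) (h : i + 2 < n) (w : Equiv.Perm (Fin n)) : Equiv.Perm (Fin n) :=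
  if (sB n i h * w)⁻¹ ⟨i + 1, by omega⟩ < (sB n i h * w)⁻¹ ⟨i, by omega⟩ then
    sA n i h * w
  else sB n i h * w

/-- for `w ∈ D_{αᵢ,α_{i+1}}`, Vogan's operator lands in
`D_{α_{i+1},αᵢ}` and the operator in the opposite direction is inverse to it. -/
theorem stmt18 (n i : ℕ) (h : i + 2 < n) (w : Equiv.Perm (Fin n))
    (hw : inDAB n i h w) :
    inDBA n i h (vTAB n i h w) ∧ vTBA n i h (vTAB n i h w) = w := by
  obtain ⟨h1, h2⟩ := hw
  have e20 : ((⟨i+2, h⟩ : Fin n)) ≠ ⟨i, by omega⟩ := by simp [Fin.ext_iff]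
  have e21 : ((⟨i+2, h⟩ : Fin n)) ≠ ⟨i+1, by omega⟩ := by simp [Fin.ext_iff]
  have e01 : ((⟨i, by omega⟩ : Fin n)) ≠ ⟨i+1, by omega⟩ := by simp [Fin.ext_iff]
  have e02 : ((⟨i, by omega⟩ : Fin n)) ≠ ⟨i+2, h⟩ := by simp [Fin.ext_iff]
  simp only [vTAB, vTBA, inDBA, sA, sB, mul_inv_rev, Equiv.swap_inv,
    Equiv.Perm.mul_apply, Equiv.swap_apply_left, Equiv.swap_apply_right,
    Equiv.swap_apply_of_ne_of_ne e20 e21, Equiv.swap_apply_of_ne_of_ne e01 e02]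
  by_cases hc : w⁻¹ ⟨i + 2, h⟩ < w⁻¹ ⟨i, by omega⟩
  · simp only [hc, if_pos, mul_inv_rev, Equiv.swap_inv, Equiv.Perm.mul_apply,
      Equiv.swap_apply_left, Equiv.swap_apply_right,
      Equiv.swap_apply_of_ne_of_ne e20 e21, Equiv.swap_apply_of_ne_of_ne e01 e02]
    refine ⟨⟨by trivial, h2⟩, ?_⟩
    rw [if_neg (by exact fun hcon => absurd (hcon.trans h1) (lt_irrefl _))]
    simp [Equiv.swap_mul_self]
  · simp only [hc, if_false, mul_inv_rev, Equiv.swap_inv, Equiv.Perm.mul_apply,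
      Equiv.swap_apply_left, Equiv.swap_apply_right,
      Equiv.swap_apply_of_ne_of_ne e20 e21, Equiv.swap_apply_of_ne_of_ne e01 e02]
    have hac : w⁻¹ ⟨i, by omega⟩ < w⁻¹ ⟨i + 2, h⟩ := by
      rcases lt_or_eq_of_le (not_lt.mp hc) with h' | h'
      · exact h'
      · exact absurd (w⁻¹.injective h') (by simp [Fin.ext_iff])
    refine ⟨⟨h1, hac⟩, ?_⟩
    rw [if_pos h2]
    simp [Equiv.swap_mul_self]
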